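/- (Lemma 2 of the paper.) Let u_max > 0 and α ≥ 1 be real constants, e₁ = (1,0), e₂ = (0,1). Let d, ḋ ∈ ℝ² with d ≠ 0 and set d̂ = d/‖d‖. Suppose that for every (x, y) ∈ {1/α, 1} × {1/α, 1} the inequality ‖ḋ‖ · (x · ⟪e₁, d̂⟫ + y · ⟪e₂, d̂⟫) ≤ ⟪ḋ, d̂⟫ fails (i.e., ‖ḋ‖(x⟪e₁, d̂⟫ + y⟪e₂, d̂⟫) > ⟪ḋ, d̂⟫ for all four corner pairs). Then there is no u ∈ ℝ² satisfying simultaneously: ‖u‖_∞ ≤ u_max, ⟪u, e₁⟫ ≤ −u_max/α, ⟪u, e₂⟫ ≤ −u_max/α, and −(‖ḋ‖/u_max) · ⟪u, d̂⟫ − ⟪ḋ, d̂⟫ ≤ 0. -/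

import Mathlib

open scoped RealInnerProductSpace

noncomputable def e1 : EuclideanSpace ℝ (Fin 2) := EuclideanSpace.single 0 1
noncomputable def e2 : EuclideanSpace ℝ (Fin 2) := EuclideanSpace.single 1 1

/-- Infinity norm on ℝ²: `‖u‖_∞ = max (|⟪u, e₁⟫|) (|⟪u, e₂⟫|)`. -/
noncomputable def infNorm (u : EuclideanSpace ℝ (Fin 2)) : ℝ :=
  max |⟪u, e1⟫| |⟪u, e2⟫|

/-- Lemma 2 of the paper (constraint incompatibility with the predator): if none
of the four corner conditions hold, then no control simultaneously satisfies the
control bound, the two active-wall conditions, and the predator-avoidance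
constraint. -/
theorem stmt_11 (umax α : ℝ) (humax : 0 < umax) (hα : 1 ≤ α)
    (d ddot : EuclideanSpace ℝ (Fin 2)) (hd : d ≠ 0)
    (hcorner : ∀ x ∈ ({1 / α, 1} : Set ℝ), ∀ y ∈ ({1 / α, 1} : Set ℝ),
      ‖ddot‖ * (x * ⟪e1, ‖d‖⁻¹ • d⟫ + y * ⟪e2, ‖d‖⁻¹ • d⟫)
        > ⟪ddot, ‖d‖⁻¹ • d⟫) :
    ¬ ∃ u : EuclideanSpace ℝ (Fin 2),
      infNorm u ≤ umax ∧
      ⟪u, e1⟫ ≤ -(umax / α) ∧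
      ⟪u, e2⟫ ≤ -(umax / α) ∧
      -((‖ddot‖ / umax) * ⟪u, ‖d‖⁻¹ • d⟫) - ⟪ddot, ‖d‖⁻¹ • d⟫ ≤ 0 := by
  rintro ⟨u, hinf, h1, h2, hcon⟩
  set v : EuclideanSpace ℝ (Fin 2) := ‖d‖⁻¹ • d with hv
  set a : ℝ := ⟪e1, v⟫ with ha
  set b : ℝ := ⟪e2, v⟫ with hb
  set S : ℝ := ⟪ddot, v⟫ with hS
  set A : ℝ := ‖ddot‖ * a with hA
  set B : ℝ := ‖ddot‖ * b with hB
  have hα0 : 0 < α := lt_of_lt_of_le one_pos hα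
  -- four corners
  have m1 : (1/α : ℝ) ∈ ({1 / α, 1} : Set ℝ) := by left; rfl
  have m2 : (1 : ℝ) ∈ ({1 / α, 1} : Set ℝ) := by right; rfl
  have c11 := hcorner (1/α) m1 (1/α) m1
  have c12 := hcorner (1/α) m1 1 m2
  have c21 := hcorner 1 m2 (1/α) m1
  have c22 := hcorner 1 m2 1 m2
  have key : ∀ x y : ℝ, 1/α ≤ x → x ≤ 1 → 1/α ≤ y → y ≤ 1 → S < x * A + y * B := by
    intro x y hx1 hx2 hy1 hy2
    rcases le_or_gt 0 A with hA0 | hA0 <;> rcases le_or_gt 0 B with hB0 | hB0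
    · nlinarith [mul_le_mul_of_nonneg_right hx1 hA0, mul_le_mul_of_nonneg_right hy1 hB0]
    · nlinarith [mul_le_mul_of_nonneg_right hx1 hA0, mul_le_mul_of_nonpos_right hy2 hB0.le]
    · nlinarith [mul_le_mul_of_nonpos_right hx2 hA0.le, mul_le_mul_of_nonneg_right hy1 hB0]
    · nlinarith [mul_le_mul_of_nonpos_right hx2 hA0.le, mul_le_mul_of_nonpos_right hy2 hB0.le]
  -- expand inner products
  have hexp : ⟪u, v⟫ = ⟪u, e1⟫ * a + ⟪u, e2⟫ * b := by
    simp only [ha, hb, e1, e2, EuclideanSpace.inner_single_left, EuclideanSpace.inner_single_right,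
      RCLike.inner_apply, conj_trivial, map_one, one_mul, mul_one]
    simp [PiLp.inner_apply, Fin.sum_univ_two, mul_comm]
  set u1 : ℝ := ⟪u, e1⟫ with hu1
  set u2 : ℝ := ⟪u, e2⟫ with hu2
  have hb1 : |u1| ≤ umax := le_trans (le_max_left _ _) hinf
  have hb2 : |u2| ≤ umax := le_trans (le_max_right _ _) hinf
  have hb1' := abs_le.mp hb1
  have hb2' := abs_le.mp hb2
  set x : ℝ := -u1 / umax with hx
  set y : ℝ := -u2 / umax with hy
  have hx1 : 1/α ≤ x := by
    rw [hx, le_div_iff₀ humax]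
    have : umax / α ≤ -u1 := by linarith
    calc 1/α * umax = umax / α := by ring
    _ ≤ -u1 := this
  have hx2 : x ≤ 1 := by rw [hx, div_le_one humax]; linarith [hb1'.1]
  have hy1 : 1/α ≤ y := by
    rw [hy, le_div_iff₀ humax]
    have : umax / α ≤ -u2 := by linarith
    calc 1/α * umax = umax / α := by ring
    _ ≤ -u2 := this
  have hy2 : y ≤ 1 := by rw [hy, div_le_one humax]; linarith [hb2'.1]
  have hk := key x y hx1 hx2 hy1 hy2
  have heq : x * A + y * B = -((‖ddot‖ / umax) * ⟪u, v⟫) := by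
    rw [hexp, hx, hy, hA, hB]
    field_simp
    ring
  rw [heq] at hk
  linarith
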